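/- If σ and τ are commuting density matrices with σ ⪰ τ, then there exist nonnegative reals p_k summing to 1 and unitary permutation operators P_k (permuting a common eigenbasis) such that τ = Σ_k p_k P_k σ P_k*, and the family f_k = √(p_k) P_k is a bi-stochastic measurement realizing τ from σ. -/

import Mathlib

open scoped ComplexOrder

open Matrix Finset in
/-- `u` rearranged in decreasing order. -/
noncomputable def sortDesc {n : ℕ} (u : Fin n → ℝ) : Fin n → ℝ :=
  fun i => u (Tuple.sort u i.rev)

open Finset in
/-- `u` majorizes `v`: every partial sum of the decreasing rearrangement of `u`
dominates that of `v`, and the total sums agree. -/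
noncomputable def Majorizes {n : ℕ} (u v : Fin n → ℝ) : Prop :=
  (∀ k : ℕ, ∑ i ∈ Finset.univ.filter (fun i : Fin n => (i : ℕ) < k), sortDesc v i ≤
      ∑ i ∈ Finset.univ.filter (fun i : Fin n => (i : ℕ) < k), sortDesc u i) ∧
  ∑ i, u i = ∑ i, v i

/-! ### Auxiliary lemmas about `sortDesc` -/

open Finset

/-- the permutation underlying `sortDesc` -/
noncomputable def sortDescPerm {n : ℕ} (u : Fin n → ℝ) : Equiv.Perm (Fin n) :=
  (Fin.revPerm : Equiv.Perm (Fin n)).trans (Tuple.sort u)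

lemma sortDesc_eq_comp {n : ℕ} (u : Fin n → ℝ) (i : Fin n) :
    sortDesc u i = u (sortDescPerm u i) := rfl

lemma antitone_sortDesc {n : ℕ} (u : Fin n → ℝ) : Antitone (sortDesc u) := by
  intro i j hij
  exact Tuple.monotone_sort u (show j.rev ≤ i.rev by
    simpa [Fin.rev_le_rev] using hij)

lemma multiset_map_sortDesc {n : ℕ} (u : Fin n → ℝ) :
    Multiset.map (sortDesc u) Finset.univ.val = Multiset.map u Finset.univ.val := by
  have h : Multiset.map (sortDesc u) Finset.univ.val
      = Multiset.map u (Multiset.map (sortDescPerm u) Finset.univ.val) := by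
    rw [Multiset.map_map]; rfl
  rw [h]
  congr 1
  calc Multiset.map (⇑(sortDescPerm u)) Finset.univ.val
      = (Finset.univ.map (sortDescPerm u).toEmbedding).val := by
        simp [Finset.map]
    _ = Finset.univ.val := by rw [Finset.map_univ_equiv]

lemma multiset_ofFn {n : ℕ} (u : Fin n → ℝ) :
    Multiset.map u Finset.univ.val = ↑(List.ofFn u) := by
  rw [List.ofFn_eq_map]
  simp [Fin.univ_def, Finset.val]

lemma sorted_ofFn_of_antitone {n : ℕ} {u : Fin n → ℝ} (hu : Antitone u) :
    (List.ofFn u).Pairwise (· ≥ ·) := by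
  rw [List.pairwise_ofFn]
  intro i j hij
  exact hu hij.le

lemma antitone_unique {n : ℕ} {u v : Fin n → ℝ} (hu : Antitone u) (hv : Antitone v)
    (h : Multiset.map u Finset.univ.val = Multiset.map v Finset.univ.val) : u = v := by
  have h2 : List.Perm (List.ofFn u) (List.ofFn v) := by
    rw [multiset_ofFn, multiset_ofFn] at h
    exact Multiset.coe_eq_coe.mp h
  have := List.Perm.eq_of_pairwise (fun a b _ _ h1 h2 => le_antisymm h2 h1) (sorted_ofFn_of_antitone hu) (sorted_ofFn_of_antitone hv) h2
  exact List.ofFn_injective this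

/-! ### A Hardy–Littlewood–Pólya style lemma -/

lemma hlp_aux {n : ℕ} (c : Fin n → ℝ) (hc : Antitone c) :
    ∀ (N : ℕ) (d : Fin n → ℝ),
      (Finset.univ.filter (fun i => d i ≠ c i)).card ≤ N →
      (∀ m : ℕ, ∑ i ∈ Finset.univ.filter (fun i : Fin n => (i : ℕ) < m), c i ≤
        ∑ i ∈ Finset.univ.filter (fun i : Fin n => (i : ℕ) < m), d i) →
      (∑ i, d i = ∑ i, c i) →
      ∃ (m : ℕ) (p : Fin m → ℝ) (ρ : Fin m → Equiv.Perm (Fin n)),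
        (∀ k, 0 ≤ p k) ∧ (∑ k, p k = 1) ∧ (∀ i, c i = ∑ k, p k * d (ρ k i)) := by
  intro N
  induction N with
  | zero =>
    intro d hcard _ _
    have hdc : d = c := by
      funext i
      by_contra h
      have hmem : i ∈ Finset.univ.filter (fun i => d i ≠ c i) := by simp [h]
      have := Finset.card_pos.mpr ⟨i, hmem⟩
      omega
    subst hdc
    exact ⟨1, fun _ => 1, fun _ => 1, fun _ => zero_le_one, by simp, fun i => by simp⟩
  | succ N ih =>
    intro d hcard hdom hsum
    by_cases hdc : d = c
    · subst hdc
      exact ⟨1, fun _ => 1, fun _ => 1, fun _ => zero_le_one, by simp, fun i => by simp⟩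
    have hne : (Finset.univ.filter (fun i => d i ≠ c i)).Nonempty := by
      rcases Function.ne_iff.mp hdc with ⟨i, hi⟩
      exact ⟨i, by simp [hi]⟩
    set j := (Finset.univ.filter (fun i => d i ≠ c i)).min' hne with hjdef
    have hjmem : d j ≠ c j := by
      have := Finset.min'_mem _ hne
      simpa using this
    have hjmin : ∀ i : Fin n, d i ≠ c i → j ≤ i := fun i hi =>
      Finset.min'_le _ _ (by simp [hi])
    have hlow : ∀ i : Fin n, i < j → d i = c i := fun i hij => by
      by_contra h; exact absurd (hjmin i h) (not_le.mpr hij)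
    -- c j < d j
    have hins : (Finset.univ.filter (fun i : Fin n => (i : ℕ) < (j : ℕ) + 1))
        = insert j (Finset.univ.filter (fun i : Fin n => (i : ℕ) < (j : ℕ))) := by
      ext i
      simp only [Finset.mem_filter, Finset.mem_univ, true_and, Finset.mem_insert, Fin.ext_iff]
      omega
    have hgj : c j < d j := by
      have h1 := hdom ((j : ℕ) + 1)
      have hjnot : j ∉ Finset.univ.filter (fun i : Fin n => (i : ℕ) < (j : ℕ)) := by
        simp only [Finset.mem_filter, Finset.mem_univ, true_and]
        omega
      rw [hins, Finset.sum_insert hjnot, Finset.sum_insert hjnot] at h1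
      have h2 : ∑ i ∈ Finset.univ.filter (fun i : Fin n => (i : ℕ) < (j : ℕ)), c i
          = ∑ i ∈ Finset.univ.filter (fun i : Fin n => (i : ℕ) < (j : ℕ)), d i := by
        apply Finset.sum_congr rfl
        intro i hi
        exact (hlow i (Fin.lt_def.mpr (Finset.mem_filter.mp hi).2)).symm
      have h3 : c j ≤ d j := by linarith
      exact lt_of_le_of_ne h3 (Ne.symm hjmem)
    -- k
    have hKne : (Finset.univ.filter (fun i => d i < c i)).Nonempty := by
      by_contra h
      rw [Finset.not_nonempty_iff_eq_empty, Finset.filter_eq_empty_iff] at h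
      have hge : ∀ i : Fin n, 0 ≤ d i - c i := fun i =>
        sub_nonneg.mpr (le_of_not_gt (h (Finset.mem_univ i)))
      have hz : ∑ i, (d i - c i) = 0 := by
        rw [Finset.sum_sub_distrib, hsum, sub_self]
      have := (Finset.sum_eq_zero_iff_of_nonneg (fun i _ => hge i)).mp hz j (Finset.mem_univ j)
      have : d j = c j := by linarith
      exact hjmem this
    set k := (Finset.univ.filter (fun i => d i < c i)).min' hKne with hkdef
    have hkmem : d k < c k := by
      have := Finset.min'_mem _ hKne
      simpa using this
    have hkmin : ∀ i : Fin n, d i < c i → k ≤ i := fun i hi =>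
      Finset.min'_le _ _ (by simp [hi])
    have hjk : j < k := by
      rcases lt_or_ge j k with h | h
      · exact h
      · exfalso
        rcases lt_or_eq_of_le h with h' | h'
        · exact absurd (hlow k h') (ne_of_lt hkmem)
        · rw [h'] at hkmem; linarith
    have hik : ∀ i : Fin n, i < k → c i ≤ d i := fun i h =>
      le_of_not_gt fun hh => absurd (hkmin i hh) (not_le.mpr h)
    set δ := min (d j - c j) (c k - d k) with hδdef
    have hδpos : 0 < δ := lt_min (by linarith) (by linarith)
    have hδ1 : δ ≤ d j - c j := min_le_left _ _
    have hδ2 : δ ≤ c k - d k := min_le_right _ _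
    have hcjk : c k ≤ c j := hc hjk.le
    have hdkj : d k < d j := by linarith
    set s := δ / (d j - d k) with hsdef
    have hs0 : 0 < s := div_pos hδpos (by linarith)
    have hs1 : s ≤ 1 := (div_le_one (by linarith)).mpr (by linarith)
    have hsmul : s * (d j - d k) = δ := div_mul_cancel₀ δ (by linarith)
    set d' := fun i => (1 - s) * d i + s * d (Equiv.swap j k i) with hd'def
    have hd'j : d' j = d j - δ := by
      simp only [hd'def, Equiv.swap_apply_left]
      linarith [hsmul]
    have hd'k : d' k = d k + δ := by
      simp only [hd'def, Equiv.swap_apply_right]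
      linarith [hsmul]
    have hd'other : ∀ i, i ≠ j → i ≠ k → d' i = d i := fun i h1 h2 => by
      simp only [hd'def, Equiv.swap_apply_of_ne_of_ne h1 h2]
      ring
    have hd'formula : ∀ i, d' i = d i + ((if i = j then -δ else 0) + (if i = k then δ else 0)) := by
      intro i
      by_cases h1 : i = j
      · subst h1
        rw [hd'j, if_pos rfl, if_neg hjk.ne]
        ring
      · by_cases h2 : i = k
        · subst h2
          rw [hd'k, if_neg h1, if_pos rfl]
          ring
        · rw [hd'other i h1 h2, if_neg h1, if_neg h2]
          ring
    have hsumF : ∀ F : Finset (Fin n), ∑ i ∈ F, d' i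
        = ∑ i ∈ F, d i + ((if j ∈ F then -δ else 0) + (if k ∈ F then δ else 0)) := by
      intro F
      simp only [hd'formula]
      rw [Finset.sum_add_distrib, Finset.sum_add_distrib, Finset.sum_ite_eq' F j,
        Finset.sum_ite_eq' F k]
    -- new card
    have hsubset : Finset.univ.filter (fun i => d' i ≠ c i)
        ⊆ Finset.univ.filter (fun i => d i ≠ c i) := by
      intro i hi
      have hi' : d' i ≠ c i := by simpa using hi
      simp only [Finset.mem_filter, Finset.mem_univ, true_and]
      by_cases h1 : i = j
      · subst h1; exact hjmem
      · by_cases h2 : i = k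
        · subst h2; exact ne_of_lt hkmem
        · rwa [← hd'other i h1 h2]
    have hssub : Finset.univ.filter (fun i => d' i ≠ c i)
        ⊂ Finset.univ.filter (fun i => d i ≠ c i) := by
      rw [Finset.ssubset_iff_of_subset hsubset]
      rcases le_total (d j - c j) (c k - d k) with h | h
      · refine ⟨j, by simp [hjmem], ?_⟩
        have : d' j = c j := by rw [hd'j, hδdef, min_eq_left h]; ring
        simp [this]
      · refine ⟨k, by simp [ne_of_lt hkmem], ?_⟩
        have : d' k = c k := by rw [hd'k, hδdef, min_eq_right h]; ring
        simp [this]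
    have hcard' : (Finset.univ.filter (fun i => d' i ≠ c i)).card ≤ N :=
      Nat.lt_succ_iff.mp (lt_of_lt_of_le (Finset.card_lt_card hssub) hcard)
    -- new domination
    have hdom' : ∀ m : ℕ, ∑ i ∈ Finset.univ.filter (fun i : Fin n => (i : ℕ) < m), c i ≤
        ∑ i ∈ Finset.univ.filter (fun i : Fin n => (i : ℕ) < m), d' i := by
      intro m
      set F := Finset.univ.filter (fun i : Fin n => (i : ℕ) < m) with hF
      rw [hsumF F]
      by_cases hkF : k ∈ F
      · have hjF : j ∈ F := by
          have hk' : (k : ℕ) < m := by simpa [hF] using hkF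
          have : (j : ℕ) < (k : ℕ) := hjk
          simp only [hF, Finset.mem_filter, Finset.mem_univ, true_and]
          omega
        simp only [hjF, hkF, if_pos]
        linarith [hdom m]
      · by_cases hjF : j ∈ F
        · simp only [hjF, if_pos, hkF, if_neg, not_false_iff]
          have key : δ ≤ ∑ i ∈ F, (d i - c i) := by
            have hsplit : ∑ i ∈ F, (d i - c i)
                = (d j - c j) + ∑ i ∈ F.erase j, (d i - c i) :=
              (Finset.add_sum_erase F _ hjF).symm
            have hnn : (0:ℝ) ≤ ∑ i ∈ F.erase j, (d i - c i) := by
              apply Finset.sum_nonneg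
              intro i hi
              have hiF : i ∈ F := Finset.mem_of_mem_erase hi
              have him : (i : ℕ) < m := by simpa [hF] using hiF
              have hkm : ¬ ((k : ℕ) < m) := by simpa [hF] using hkF
              have : i < k := Fin.lt_def.mpr (by omega)
              exact sub_nonneg.mpr (hik i this)
            linarith
          rw [Finset.sum_sub_distrib] at key
          linarith
        · simp only [hjF, hkF, if_neg, not_false_iff]
          have := hdom m
          linarith
    have hsum' : ∑ i, d' i = ∑ i, c i := by
      rw [hsumF Finset.univ]
      simp only [Finset.mem_univ, if_pos]
      linarith [hsum]
    obtain ⟨m, p, ρ, hp0, hp1, hpc⟩ := ih d' hcard' hdom' hsum'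
    refine ⟨m + m, Fin.append (fun t => (1 - s) * p t) (fun t => s * p t),
      Fin.append ρ (fun t => (ρ t).trans (Equiv.swap j k)), ?_, ?_, ?_⟩
    · intro t
      refine Fin.addCases (fun t' => ?_) (fun t' => ?_) t
      · rw [Fin.append_left]
        exact mul_nonneg (by linarith) (hp0 t')
      · rw [Fin.append_right]
        exact mul_nonneg (by linarith) (hp0 t')
    · rw [Fin.sum_univ_add]
      simp only [Fin.append_left, Fin.append_right]
      rw [← Finset.mul_sum, ← Finset.mul_sum, hp1]
      ring
    · intro i
      rw [Fin.sum_univ_add]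
      simp only [Fin.append_left, Fin.append_right, Equiv.trans_apply]
      have step : c i = ∑ t, ((1 - s) * p t * d (ρ t i)
          + s * p t * d (Equiv.swap j k (ρ t i))) := by
        rw [hpc i]
        apply Finset.sum_congr rfl
        intro t _
        simp only [hd'def]
        ring
      rw [step, Finset.sum_add_distrib]

/-! ### Permutation matrices -/

open Matrix Polynomial

variable {n : ℕ}

def permMat (π : Equiv.Perm (Fin n)) : Matrix (Fin n) (Fin n) ℂ :=
  Matrix.of fun i j => if i = π j then 1 else 0

lemma permMat_mul (π ρ : Equiv.Perm (Fin n)) :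
    permMat π * permMat ρ = permMat (π * ρ) := by
  ext i j
  rw [Matrix.mul_apply]
  simp only [permMat, Matrix.of_apply]
  have h : ∀ k, (if i = π k then (1:ℂ) else 0) * (if k = ρ j then 1 else 0)
      = if k = ρ j then (if i = π k then 1 else 0) else 0 := by
    intro k; split_ifs <;> ring
  rw [Finset.sum_congr rfl fun k _ => h k, Finset.sum_ite_eq' Finset.univ (ρ j)]
  simp [Equiv.Perm.mul_apply]
  congr

lemma permMat_conjTranspose (π : Equiv.Perm (Fin n)) :
    (permMat π)ᴴ = permMat π⁻¹ := by
  ext i j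
  simp only [Matrix.conjTranspose_apply, permMat, Matrix.of_apply]
  by_cases h : j = π i
  · have h3 : i = π⁻¹ j := by rw [h]; simp
    rw [if_pos h, if_pos h3, star_one]
  · have h2 : ¬ i = π⁻¹ j := fun hh => h (by rw [hh]; simp)
    rw [if_neg h, if_neg h2, star_zero]

lemma permMat_one : permMat (1 : Equiv.Perm (Fin n)) = 1 := by
  ext i j
  simp [permMat, Matrix.one_apply]
  congr

lemma permMat_mem_unitary (π : Equiv.Perm (Fin n)) :
    permMat π ∈ Matrix.unitaryGroup (Fin n) ℂ := by
  rw [Matrix.mem_unitaryGroup_iff]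
  rw [Matrix.star_eq_conjTranspose, permMat_conjTranspose, permMat_mul]
  simp [permMat_one]

lemma permMat_mulVec_single (π : Equiv.Perm (Fin n)) (i : Fin n) :
    permMat π *ᵥ Pi.single i 1 = Pi.single (π i) 1 := by
  ext r
  rw [Matrix.mulVec_single_one]
  simp only [permMat, Matrix.of_apply, Matrix.col_apply, mul_one]
  rw [Pi.single_apply]

lemma permMat_mul_diagonal (π : Equiv.Perm (Fin n)) (v : Fin n → ℂ) :
    permMat π * Matrix.diagonal v = Matrix.diagonal (fun i => v (π⁻¹ i)) * permMat π := by
  ext i j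
  rw [Matrix.mul_diagonal, Matrix.diagonal_mul]
  simp only [permMat, Matrix.of_apply]
  split_ifs with h
  · have h3 : v (π⁻¹ i) = v j := by rw [h]; simp
    rw [h3, one_mul, mul_one]
  · rw [zero_mul, mul_zero]

lemma permMat_conj_diagonal (π : Equiv.Perm (Fin n)) (v : Fin n → ℂ) :
    permMat π * Matrix.diagonal v * (permMat π)ᴴ = Matrix.diagonal (fun i => v (π⁻¹ i)) := by
  rw [permMat_mul_diagonal, Matrix.mul_assoc, permMat_conjTranspose, permMat_mul]
  simp [permMat_one]

/-! ### Characteristic polynomial arguments -/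

lemma charpoly_unitary_conj (U N : Matrix (Fin n) (Fin n) ℂ)
    (hU : U ∈ Matrix.unitaryGroup (Fin n) ℂ) :
    (U * N * Uᴴ).charpoly = N.charpoly := by
  have hUU : U * Uᴴ = 1 := by
    simpa [Matrix.star_eq_conjTranspose] using Matrix.mem_unitaryGroup_iff.mp hU
  set f := (Polynomial.C : ℂ →+* Polynomial ℂ) with hf
  have hmap1 : U.map f * Uᴴ.map f = 1 := by
    rw [← Matrix.map_mul, hUU, Matrix.map_one f (map_zero f) (map_one f)]
  have h2 : U.map f * Matrix.scalar (Fin n) (X : ℂ[X]) * Uᴴ.map f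
      = Matrix.scalar (Fin n) (X : ℂ[X]) := by
    have hcomm := (Matrix.scalar_commute (X : ℂ[X]) (fun r => Commute.all _ _) (U.map f)).eq
    rw [← hcomm, Matrix.mul_assoc, hmap1, Matrix.mul_one]
  have hcm : charmatrix (U * N * Uᴴ) = U.map f * charmatrix N * Uᴴ.map f := by
    rw [charmatrix, charmatrix, Matrix.mul_sub, Matrix.sub_mul]
    congr 1
    · exact h2.symm
    · simp only [RingHom.mapMatrix_apply, Matrix.map_mul, hf]
  rw [Matrix.charpoly, Matrix.charpoly, hcm, Matrix.det_mul, Matrix.det_mul]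
  have hdet : (U.map f).det * (Uᴴ.map f).det = 1 := by
    rw [← Matrix.det_mul, hmap1, Matrix.det_one]
  rw [mul_right_comm, hdet, one_mul]

lemma charpoly_diag (v : Fin n → ℂ) :
    (Matrix.diagonal v).charpoly = ∏ i, (X - C (v i)) := by
  rw [Matrix.charpoly_of_upperTriangular _ (Matrix.blockTriangular_diagonal v)]
  simp

lemma eig_multiset {M U W : Matrix (Fin n) (Fin n) ℂ}
    (hU : U ∈ Matrix.unitaryGroup (Fin n) ℂ) (hW : W ∈ Matrix.unitaryGroup (Fin n) ℂ)
    {α β : Fin n → ℂ} (h1 : M = U * Matrix.diagonal α * Uᴴ)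
    (h2 : M = W * Matrix.diagonal β * Wᴴ) :
    Multiset.map α Finset.univ.val = Multiset.map β Finset.univ.val := by
  have e1 := charpoly_unitary_conj U (Matrix.diagonal α) hU
  have e2 := charpoly_unitary_conj W (Matrix.diagonal β) hW
  rw [← h1] at e1
  rw [← h2] at e2
  have hα : (Matrix.diagonal α).charpoly = (Matrix.diagonal β).charpoly := by
    rw [← e1, ← e2]
  rw [charpoly_diag, charpoly_diag] at hα
  have key : ∀ γ : Fin n → ℂ, (∏ i, (X - C (γ i)))
      = ((Multiset.map γ Finset.univ.val).map (fun a => X - C a)).prod := by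
    intro γ
    rw [Finset.prod_eq_multiset_prod, Multiset.map_map]
    rfl
  rw [key α, key β] at hα
  have := congrArg Polynomial.roots hα
  rwa [Polynomial.roots_multiset_prod_X_sub_C, Polynomial.roots_multiset_prod_X_sub_C] at this

/-! ### Common eigenbasis of commuting hermitian matrices -/

set_option maxHeartbeats 1000000 in
open LinearMap Module.End in
lemma joint_eigenbasis {n : ℕ} (σ τ : Matrix (Fin n) (Fin n) ℂ)
    (hσ : σ.IsHermitian) (hτ : τ.IsHermitian) (hcomm : σ * τ = τ * σ) :
    ∃ (x : Fin n → (Fin n → ℂ)) (a b : Fin n → ℝ),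
      (∀ i j, dotProduct (star (x i)) (x j) = if i = j then 1 else 0) ∧
      (∀ i, σ.mulVec (x i) = (a i : ℂ) • x i) ∧
      (∀ i, τ.mulVec (x i) = (b i : ℂ) • x i) := by
  classical
  set A : Module.End ℂ (EuclideanSpace ℂ (Fin n)) := Matrix.toEuclideanLin σ with hAdef
  set B : Module.End ℂ (EuclideanSpace ℂ (Fin n)) := Matrix.toEuclideanLin τ with hBdef
  have hA : A.IsSymmetric := Matrix.isHermitian_iff_isSymmetric.mp hσ
  have hB : B.IsSymmetric := Matrix.isHermitian_iff_isSymmetric.mp hτ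
  have hmulEuc : ∀ (M N : Matrix (Fin n) (Fin n) ℂ) (v : EuclideanSpace ℂ (Fin n)),
      Matrix.toEuclideanLin M (Matrix.toEuclideanLin N v) = Matrix.toEuclideanLin (M * N) v := by
    intro M N v
    rw [Matrix.toEuclideanLin_apply, Matrix.toEuclideanLin_apply, Matrix.toEuclideanLin_apply,
      WithLp.ofLp_toLp, Matrix.mulVec_mulVec]
  have hABcomm : Commute A B := by
    show A * B = B * A
    ext v
    rw [Module.End.mul_apply, Module.End.mul_apply, hAdef, hBdef, hmulEuc, hmulEuc, hcomm]
  set V : ℂ × ℂ → Submodule ℂ (EuclideanSpace ℂ (Fin n)) :=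
    fun q => eigenspace A q.2 ⊓ eigenspace B q.1 with hVdef
  have hIa : DirectSum.IsInternal V :=
    LinearMap.IsSymmetric.directSum_isInternal_of_commute hA hB hABcomm
  set S : Set (ℂ × ℂ) := {q | V q ≠ ⊥} with hSdef
  have hSfin : S.Finite := by
    apply Set.Finite.subset ((Module.End.finite_hasEigenvalue B).prod
      (Module.End.finite_hasEigenvalue A))
    intro q hq
    rw [Set.mem_prod]
    constructor
    · show B.HasEigenvalue q.1
      rw [Module.End.hasEigenvalue_iff]
      intro h
      exact hq (le_bot_iff.mp (le_trans inf_le_right h.le))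
    · show A.HasEigenvalue q.2
      rw [Module.End.hasEigenvalue_iff]
      intro h
      exact hq (le_bot_iff.mp (le_trans inf_le_left h.le))
  haveI : Fintype S := hSfin.fintype
  have hOF := LinearMap.IsSymmetric.orthogonalFamily_eigenspace_inf_eigenspace hA hB
  have hOF' := hOF.comp (Subtype.val_injective : Function.Injective ((↑) : S → ℂ × ℂ))
  have hsup : (⨆ q : S, V q.1) = ⊤ := by
    rw [← hIa.submodule_iSup_eq_top]
    apply le_antisymm
    · exact iSup_le fun q => le_iSup V q.1
    · apply iSup_le
      intro q
      by_cases h : V q = ⊥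
      · rw [h]; exact bot_le
      · exact le_iSup (fun q : S => V q.1) ⟨q, h⟩
  have hint' : DirectSum.IsInternal (fun q : S => V q.1) := by
    rw [hOF'.isInternal_iff]
    rw [hsup, Submodule.top_orthogonal_eq_bot]
  have hn : Module.finrank ℂ (EuclideanSpace ℂ (Fin n)) = n := finrank_euclideanSpace_fin
  set basis := hint'.subordinateOrthonormalBasis hn hOF' with hbasisdef
  set q : Fin n → S := fun i => hint'.subordinateOrthonormalBasisIndex hn i hOF' with hqdef
  have hmem : ∀ i, basis i ∈ V (q i).1 := fun i =>
    hint'.subordinateOrthonormalBasis_subordinate hn i hOF'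
  have hAeig : ∀ i, A (basis i) = ((q i).1.2 : ℂ) • basis i := fun i =>
    mem_eigenspace_iff.mp (hmem i).1
  have hBeig : ∀ i, B (basis i) = ((q i).1.1 : ℂ) • basis i := fun i =>
    mem_eigenspace_iff.mp (hmem i).2
  have hbne : ∀ i, basis i ≠ 0 := fun i => by
    simpa using basis.toBasis.ne_zero i
  have hreal : ∀ (T : Module.End ℂ (EuclideanSpace ℂ (Fin n)))
      (_ : T.IsSymmetric) (μ : ℂ) (v : EuclideanSpace ℂ (Fin n)), v ≠ 0 → T v = μ • v →
      (μ.re : ℂ) = μ := by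
    intro T hT μ v hv hTv
    have : HasEigenvalue T μ := hasEigenvalue_of_hasEigenvector ⟨mem_eigenspace_iff.mpr hTv, hv⟩
    have hconj := hT.conj_eigenvalue_eq_self this
    rw [← Complex.conj_eq_iff_re]
    exact hconj
  refine ⟨fun i => (WithLp.equiv 2 (Fin n → ℂ)) (basis i), fun i => ((q i).1.2).re,
    fun i => ((q i).1.1).re, ?_, ?_, ?_⟩
  · intro i j
    rw [dotProduct_comm]
    exact orthonormal_iff_ite.mp basis.orthonormal i j
  · intro i
    have h1 := hAeig i
    have h2 := hreal A hA _ _ (hbne i) h1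
    rw [h2]
    have h3 := congrArg (WithLp.equiv 2 (Fin n → ℂ)) h1
    change σ *ᵥ _ = _ at h3
    simpa using h3
  · intro i
    have h1 := hBeig i
    have h2 := hreal B hB _ _ (hbne i) h1
    rw [h2]
    have h3 := congrArg (WithLp.equiv 2 (Fin n → ℂ)) h1
    change τ *ᵥ _ = _ at h3
    simpa using h3

open Matrix in
/-- If `σ` and `τ` are commuting density matrices with `σ ⪰ τ`, then there are weights
`p k` and unitary operators `P k` permuting a common orthonormal eigenbasis of `σ` and `τ`
such that `τ = ∑ k, p k • P k σ (P k)ᴴ`, and the family `f k = √(p k) • P k` is a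
bi-stochastic measurement realizing `τ` from `σ`. -/
theorem exists_permutation_mixture_of_commuting_majorizes {n : ℕ}
    (σ τ : Matrix (Fin n) (Fin n) ℂ)
    (hσ : σ.PosSemidef) (hσtr : σ.trace = 1)
    (hτ : τ.PosSemidef) (hτtr : τ.trace = 1)
    (hcomm : σ * τ = τ * σ)
    (hmaj : Majorizes (hσ.1.eigenvalues) (hτ.1.eigenvalues)) :
    ∃ (m : ℕ) (p : Fin m → ℝ) (P : Fin m → Matrix (Fin n) (Fin n) ℂ)
      (x : Fin n → (Fin n → ℂ)) (π : Fin m → Equiv.Perm (Fin n)),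
      (∀ k, 0 ≤ p k) ∧ (∑ k, p k = 1) ∧
      (∀ i j, dotProduct (star (x i)) (x j) = if i = j then 1 else 0) ∧
      (∀ i, ∃ c : ℂ, σ.mulVec (x i) = c • x i) ∧
      (∀ i, ∃ c : ℂ, τ.mulVec (x i) = c • x i) ∧
      (∀ k, P k ∈ Matrix.unitaryGroup (Fin n) ℂ) ∧
      (∀ k i, (P k).mulVec (x i) = x (π k i)) ∧
      (τ = ∑ k, (p k : ℂ) • (P k * σ * (P k)ᴴ)) ∧
      (∑ k, ((Real.sqrt (p k) : ℂ) • P k)ᴴ * ((Real.sqrt (p k) : ℂ) • P k) = 1) ∧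
      (∑ k, ((Real.sqrt (p k) : ℂ) • P k) * ((Real.sqrt (p k) : ℂ) • P k)ᴴ = 1) ∧
      (τ = ∑ k, ((Real.sqrt (p k) : ℂ) • P k) * σ * ((Real.sqrt (p k) : ℂ) • P k)ᴴ) := by
  classical
  obtain ⟨x, a, b, hx, heigσ, heigτ⟩ := joint_eigenbasis σ τ hσ.1 hτ.1 hcomm
  set U : Matrix (Fin n) (Fin n) ℂ := Matrix.of (fun i j => x j i) with hUdef
  have hUU : Uᴴ * U = 1 := by
    ext i j
    rw [Matrix.mul_apply, Matrix.one_apply]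
    simpa [Matrix.conjTranspose_apply, hUdef, dotProduct] using hx i j
  have hUU' : U * Uᴴ = 1 := mul_eq_one_comm.mp hUU
  have hUmem : U ∈ Matrix.unitaryGroup (Fin n) ℂ := by
    rw [Matrix.mem_unitaryGroup_iff', Matrix.star_eq_conjTranspose]; exact hUU
  have hUcol : ∀ i, U *ᵥ Pi.single i 1 = x i := by
    intro i; ext r; rw [Matrix.mulVec_single]; simp [hUdef]
  have hdiag : ∀ (M : Matrix (Fin n) (Fin n) ℂ) (v : Fin n → ℝ),
      (∀ i, M.mulVec (x i) = (v i : ℂ) • x i) →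
      M = U * Matrix.diagonal (fun i => (v i : ℂ)) * Uᴴ := by
    intro M v hv
    have hMU : M * U = U * Matrix.diagonal (fun i => (v i : ℂ)) := by
      ext i j
      rw [Matrix.mul_apply, Matrix.mul_diagonal]
      have h := congrFun (hv j) i
      simp only [Matrix.mulVec, dotProduct, Pi.smul_apply, smul_eq_mul] at h
      simp only [hUdef, Matrix.of_apply]
      rw [h, mul_comm]
    calc M = M * U * Uᴴ := by rw [Matrix.mul_assoc, hUU', Matrix.mul_one]
      _ = U * Matrix.diagonal (fun i => (v i : ℂ)) * Uᴴ := by rw [hMU]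
  have hσdiag := hdiag σ a heigσ
  have hτdiag := hdiag τ b heigτ
  -- multiset identities with the spectral theorem eigenvalues
  have hWσ : σ = (hσ.1.eigenvectorUnitary : Matrix (Fin n) (Fin n) ℂ)
      * Matrix.diagonal (fun i => ((hσ.1.eigenvalues i : ℝ) : ℂ))
      * (hσ.1.eigenvectorUnitary : Matrix (Fin n) (Fin n) ℂ)ᴴ := by
    have h := hσ.1.spectral_theorem
    rwa [Unitary.conjStarAlgAut_apply, Matrix.star_eq_conjTranspose] at h
  have hWτ : τ = (hτ.1.eigenvectorUnitary : Matrix (Fin n) (Fin n) ℂ)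
      * Matrix.diagonal (fun i => ((hτ.1.eigenvalues i : ℝ) : ℂ))
      * (hτ.1.eigenvectorUnitary : Matrix (Fin n) (Fin n) ℂ)ᴴ := by
    have h := hτ.1.spectral_theorem
    rwa [Unitary.conjStarAlgAut_apply, Matrix.star_eq_conjTranspose] at h
  have hcastms : ∀ (u v : Fin n → ℝ),
      Multiset.map (fun i => ((u i : ℝ) : ℂ)) Finset.univ.val
        = Multiset.map (fun i => ((v i : ℝ) : ℂ)) Finset.univ.val →
      Multiset.map u Finset.univ.val = Multiset.map v Finset.univ.val := by
    intro u v h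
    have h2 := congrArg (Multiset.map Complex.re) h
    rw [Multiset.map_map, Multiset.map_map] at h2
    simpa [Function.comp] using h2
  have hmsσ : Multiset.map a Finset.univ.val = Multiset.map hσ.1.eigenvalues Finset.univ.val :=
    hcastms _ _ (eig_multiset hUmem hσ.1.eigenvectorUnitary.2 hσdiag hWσ)
  have hmsτ : Multiset.map b Finset.univ.val = Multiset.map hτ.1.eigenvalues Finset.univ.val :=
    hcastms _ _ (eig_multiset hUmem hτ.1.eigenvectorUnitary.2 hτdiag hWτ)
  have hsa : sortDesc a = sortDesc (hσ.1.eigenvalues) :=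
    antitone_unique (antitone_sortDesc a) (antitone_sortDesc _)
      (by rw [multiset_map_sortDesc, multiset_map_sortDesc, hmsσ])
  have hsb : sortDesc b = sortDesc (hτ.1.eigenvalues) :=
    antitone_unique (antitone_sortDesc b) (antitone_sortDesc _)
      (by rw [multiset_map_sortDesc, multiset_map_sortDesc, hmsτ])
  have hsums : ∀ (u : Fin n → ℝ), ∑ i, sortDesc u i = ∑ i, u i := fun u => by
    rw [Finset.sum_congr rfl (fun i _ => sortDesc_eq_comp u i)]
    exact Equiv.sum_comp (sortDescPerm u) u
  have hmssum : ∀ (u v : Fin n → ℝ),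
      Multiset.map u Finset.univ.val = Multiset.map v Finset.univ.val →
      ∑ i, u i = ∑ i, v i := by
    intro u v h
    rw [Finset.sum_eq_multiset_sum, Finset.sum_eq_multiset_sum, h]
  have hsumab : ∑ i, a i = ∑ i, b i :=
    (hmssum _ _ hmsσ).trans (hmaj.2.trans (hmssum _ _ hmsτ).symm)
  obtain ⟨m, p, ρ, hp0, hp1, hpc⟩ := hlp_aux (sortDesc b) (antitone_sortDesc b)
    ((Finset.univ.filter (fun i => sortDesc a i ≠ sortDesc b i)).card) (sortDesc a) le_rfl
    (by intro mm; rw [hsa, hsb]; exact hmaj.1 mm)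
    (by rw [hsums a, hsums b]; exact hsumab)
  set π : Fin m → Equiv.Perm (Fin n) :=
    fun t => (((sortDescPerm b)⁻¹).trans ((ρ t).trans (sortDescPerm a)))⁻¹ with hπdef
  have hπinv : ∀ t i, (π t)⁻¹ i = sortDescPerm a (ρ t ((sortDescPerm b)⁻¹ i)) := by
    intro t i
    simp [hπdef]
  have hba : ∀ i, b i = ∑ t, p t * a ((π t)⁻¹ i) := by
    intro i
    have h1 := hpc ((sortDescPerm b)⁻¹ i)
    have h2 : sortDesc b ((sortDescPerm b)⁻¹ i) = b i := by
      rw [sortDesc_eq_comp]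
      congr 1
      exact Equiv.apply_symm_apply _ _
    rw [h2] at h1
    rw [h1]
    apply Finset.sum_congr rfl
    intro t _
    rw [sortDesc_eq_comp, hπinv]
  set P : Fin m → Matrix (Fin n) (Fin n) ℂ := fun k => U * permMat (π k) * Uᴴ with hPdef
  have hPmem : ∀ k, P k ∈ Matrix.unitaryGroup (Fin n) ℂ := by
    intro k
    rw [hPdef]
    have h1 : Uᴴ ∈ Matrix.unitaryGroup (Fin n) ℂ := by
      rw [← Matrix.star_eq_conjTranspose]
      exact Unitary.star_mem hUmem
    exact mul_mem (mul_mem hUmem (permMat_mem_unitary (π k))) h1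
  have hPvec : ∀ k i, (P k) *ᵥ (x i) = x (π k i) := by
    intro k i
    rw [hPdef, ← hUcol i, Matrix.mulVec_mulVec]
    have h1 : U * permMat (π k) * Uᴴ * U = U * permMat (π k) := by
      rw [Matrix.mul_assoc (U * permMat (π k)), hUU, Matrix.mul_one]
    rw [h1, ← Matrix.mulVec_mulVec, permMat_mulVec_single, hUcol]
  have hconj : ∀ k, P k * σ * (P k)ᴴ
      = U * Matrix.diagonal (fun i => (a ((π k)⁻¹ i) : ℂ)) * Uᴴ := by
    intro k
    have hPH : (U * permMat (π k) * Uᴴ)ᴴ = U * (permMat (π k))ᴴ * Uᴴ := by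
      rw [Matrix.conjTranspose_mul, Matrix.conjTranspose_mul,
        Matrix.conjTranspose_conjTranspose, Matrix.mul_assoc]
    rw [hPdef, hσdiag, hPH]
    have key : U * permMat (π k) * Uᴴ * (U * Matrix.diagonal (fun i => (a i : ℂ)) * Uᴴ)
        * (U * (permMat (π k))ᴴ * Uᴴ)
        = U * (permMat (π k) * ((Uᴴ * U) * (Matrix.diagonal (fun i => (a i : ℂ))
          * ((Uᴴ * U) * (permMat (π k))ᴴ)))) * Uᴴ := by
      simp only [Matrix.mul_assoc]
    rw [key, hUU]
    have key2 : permMat (π k) * ((1 : Matrix (Fin n) (Fin n) ℂ)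
        * (Matrix.diagonal (fun i => (a i : ℂ)) * ((1 : Matrix (Fin n) (Fin n) ℂ)
          * (permMat (π k))ᴴ)))
        = Matrix.diagonal (fun i => (a ((π k)⁻¹ i) : ℂ)) := by
      rw [Matrix.one_mul, Matrix.one_mul, ← Matrix.mul_assoc, permMat_conj_diagonal]
    rw [key2]
  have hdiagsum : τ = ∑ k, (p k : ℂ) • (P k * σ * (P k)ᴴ) := by
    rw [hτdiag]
    have hterm : ∀ k, (p k : ℂ) • (P k * σ * (P k)ᴴ)
        = U * ((p k : ℂ) • Matrix.diagonal (fun i => (a ((π k)⁻¹ i) : ℂ))) * Uᴴ := by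
      intro k
      rw [hconj k, Matrix.mul_smul, Matrix.smul_mul]
    rw [Finset.sum_congr rfl (fun k _ => hterm k), ← Matrix.sum_mul, ← Matrix.mul_sum]
    congr 1
    congr 1
    ext i j
    rw [Matrix.sum_apply]
    by_cases h : i = j
    · subst h
      simp only [Matrix.smul_apply, Matrix.diagonal_apply_eq, smul_eq_mul]
      have hcast : ((b i : ℝ) : ℂ) = ∑ k, (p k : ℂ) * ((a ((π k)⁻¹ i) : ℝ) : ℂ) := by
        rw [hba i]
        push_cast
        rfl
      exact hcast
    · simp [Matrix.smul_apply, Matrix.diagonal_apply_ne _ h]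
  have hsqrt : ∀ k, ((Real.sqrt (p k) : ℝ) : ℂ) * ((Real.sqrt (p k) : ℝ) : ℂ) = ((p k : ℝ) : ℂ) := by
    intro k
    rw [← Complex.ofReal_mul, Real.mul_self_sqrt (hp0 k)]
  have hstar : ∀ k, ((Real.sqrt (p k) : ℝ) : ℂ) • (P k)ᴴ
      = (((Real.sqrt (p k) : ℝ) : ℂ) • P k)ᴴ := by
    intro k
    rw [Matrix.conjTranspose_smul, Complex.star_def, Complex.conj_ofReal]
  have hsumone : ∑ k, ((p k : ℝ) : ℂ) = 1 := by
    push_cast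
    norm_cast
  refine ⟨m, p, P, x, π, hp0, hp1, hx, fun i => ⟨(a i : ℂ), heigσ i⟩,
    fun i => ⟨(b i : ℂ), heigτ i⟩, hPmem, hPvec, hdiagsum, ?_, ?_, ?_⟩
  · have hterm : ∀ k, (((Real.sqrt (p k) : ℝ) : ℂ) • P k)ᴴ * (((Real.sqrt (p k) : ℝ) : ℂ) • P k)
        = ((p k : ℝ) : ℂ) • (1 : Matrix (Fin n) (Fin n) ℂ) := by
      intro k
      rw [← hstar k, Matrix.smul_mul, Matrix.mul_smul, smul_smul, hsqrt]
      congr 1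
      have := Matrix.mem_unitaryGroup_iff'.mp (hPmem k)
      rwa [Matrix.star_eq_conjTranspose] at this
    rw [Finset.sum_congr rfl (fun k _ => hterm k), ← Finset.sum_smul, hsumone, one_smul]
  · have hterm : ∀ k, (((Real.sqrt (p k) : ℝ) : ℂ) • P k) * (((Real.sqrt (p k) : ℝ) : ℂ) • P k)ᴴ
        = ((p k : ℝ) : ℂ) • (1 : Matrix (Fin n) (Fin n) ℂ) := by
      intro k
      rw [← hstar k, Matrix.smul_mul, Matrix.mul_smul, smul_smul, hsqrt]
      congr 1
      have := Matrix.mem_unitaryGroup_iff.mp (hPmem k)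
      rwa [Matrix.star_eq_conjTranspose] at this
    rw [Finset.sum_congr rfl (fun k _ => hterm k), ← Finset.sum_smul, hsumone, one_smul]
  · have hterm : ∀ k, (((Real.sqrt (p k) : ℝ) : ℂ) • P k) * σ * (((Real.sqrt (p k) : ℝ) : ℂ) • P k)ᴴ
        = ((p k : ℝ) : ℂ) • (P k * σ * (P k)ᴴ) := by
      intro k
      rw [← hstar k, Matrix.smul_mul, Matrix.smul_mul, Matrix.mul_smul, smul_smul, hsqrt]
    rw [Finset.sum_congr rfl (fun k _ => hterm k), ← hdiagsum]
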